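/- Type-3 spectrum of a generalized coverage function: if s_A = c + w(⋃_{i∈A} S_i) where w is an additive weight function on finite sets, then the type-3 DSFT satisfies ŝ_B = Σ_{A⊆B} (−1)^{|A|} s_A = −w(⋂_{i∈B} S_i) for all nonempty B ⊆ N, and ŝ_∅ = c. -/

import Mathlib

open Finset

def dsft3 {N : Type*} [Fintype N] [DecidableEq N] (s : Finset N → ℝ) (B : Finset N) : ℝ :=
  ∑ A ∈ B.powerset, (-1 : ℝ) ^ A.card * s A

lemma sum_powerset_neg_one_pow_card_real {α : Type*} [DecidableEq α] (x : Finset α) :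
    (∑ m ∈ x.powerset, (-1 : ℝ) ^ m.card) = if x = ∅ then 1 else 0 := by
  have := Finset.sum_powerset_neg_one_pow_card (x := x)
  have h : ((∑ m ∈ x.powerset, (-1 : ℤ) ^ m.card : ℤ) : ℝ)
      = ∑ m ∈ x.powerset, (-1 : ℝ) ^ m.card := by push_cast; ring
  rw [← h, this]
  split <;> norm_num

lemma mem_inf_iff {N U : Type*} [DecidableEq N] [Fintype U] [DecidableEq U]
    {B : Finset N} (hB : B.Nonempty) (S : N → Finset U) (u : U) :
    u ∈ B.inf S ↔ ∀ i ∈ B, u ∈ S i := by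
  rw [← Finset.inf'_eq_inf hB S, Finset.mem_inf']

theorem dsft3_generalized_coverage {N U : Type*} [Fintype N] [DecidableEq N]
    [Fintype U] [DecidableEq U]
    (S : N → Finset U) (w : U → ℝ) (c : ℝ) (s : Finset N → ℝ)
    (hs : ∀ A : Finset N, s A = c + ∑ u ∈ A.biUnion S, w u) :
    (∀ B : Finset N, B.Nonempty → dsft3 s B = -∑ u ∈ B.inf S, w u) ∧
    dsft3 s ∅ = c := by
  constructor
  · intro B hB
    have hBne : B ≠ ∅ := Finset.nonempty_iff_ne_empty.mp hB
    unfold dsft3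
    simp only [hs, mul_add]
    rw [Finset.sum_add_distrib, ← Finset.sum_mul, sum_powerset_neg_one_pow_card_real,
      if_neg hBne, zero_mul, zero_add]
    -- rewrite inner sum over biUnion as sum over univ with indicator
    have h1 : ∀ A : Finset N, (∑ u ∈ A.biUnion S, w u)
        = ∑ u ∈ Finset.univ, (if u ∈ A.biUnion S then w u else 0) := by
      intro A
      rw [Finset.sum_ite_mem, Finset.univ_inter]
    simp only [h1, Finset.mul_sum]
    rw [Finset.sum_comm]
    have h2 : ∀ u : U, (∑ A ∈ B.powerset, (-1 : ℝ) ^ A.card *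
        (if u ∈ A.biUnion S then w u else 0))
        = -(if u ∈ B.inf S then w u else 0) := by
      intro u
      have split : (∑ A ∈ B.powerset, (-1 : ℝ) ^ A.card *
          (if u ∈ A.biUnion S then w u else 0))
          = (∑ A ∈ B.powerset, (-1 : ℝ) ^ A.card * w u)
            - ∑ A ∈ B.powerset, (-1 : ℝ) ^ A.card *
              (if u ∈ A.biUnion S then 0 else w u) := by
        rw [← Finset.sum_sub_distrib]
        refine Finset.sum_congr rfl fun A _ => ?_
        by_cases h : u ∈ A.biUnion S <;> simp [h]
      rw [split, ← Finset.sum_mul, sum_powerset_neg_one_pow_card_real, if_neg hBne, zero_mul]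
      have hsub : ∑ A ∈ B.powerset, (-1 : ℝ) ^ A.card *
          (if u ∈ A.biUnion S then 0 else w u)
          = ∑ A ∈ (B.filter fun i => u ∉ S i).powerset, (-1 : ℝ) ^ A.card * w u := by
        rw [← Finset.sum_filter_add_sum_filter_not B.powerset (fun A => u ∈ A.biUnion S)]
        have hz : ∑ A ∈ B.powerset.filter (fun A => u ∈ A.biUnion S),
            (-1 : ℝ) ^ A.card * (if u ∈ A.biUnion S then 0 else w u) = 0 := by
          refine Finset.sum_eq_zero fun A hA => ?_
          rw [if_pos (Finset.mem_filter.mp hA).2, mul_zero]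
        rw [hz, zero_add]
        have hset : B.powerset.filter (fun A => ¬ u ∈ A.biUnion S)
            = (B.filter fun i => u ∉ S i).powerset := by
          ext A
          simp only [Finset.mem_filter, Finset.mem_powerset, Finset.mem_biUnion, not_exists,
            not_and, Finset.subset_iff, Finset.mem_filter]
          constructor
          · rintro ⟨h1, h2⟩ i hi
            exact ⟨h1 hi, h2 i hi⟩
          · intro h
            exact ⟨fun i hi => (h hi).1, fun i hi => (h hi).2⟩
        rw [hset]
        refine Finset.sum_congr rfl fun A hA => ?_
        have : u ∉ A.biUnion S := by
          have hA' := Finset.mem_powerset.mp hA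
          simp only [Finset.mem_biUnion, not_exists, not_and]
          intro i hi
          exact (Finset.mem_filter.mp (hA' hi)).2
        rw [if_neg this]
      rw [hsub, ← Finset.sum_mul, sum_powerset_neg_one_pow_card_real]
      have hcond : (B.filter fun i => u ∉ S i) = ∅ ↔ u ∈ B.inf S := by
        rw [Finset.filter_eq_empty_iff, mem_inf_iff hB]
        simp
      by_cases h : u ∈ B.inf S
      · rw [if_pos (hcond.mpr h), if_pos h]; ring
      · rw [if_neg (fun he => h (hcond.mp he)), if_neg h]; ring
    simp only [h2]
    rw [Finset.sum_neg_distrib, Finset.sum_ite_mem, Finset.univ_inter]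
  · simp [dsft3, hs]
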